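/- For an N×N matrix L, one has Tr(Lᵀ Ω A) = 0 for all A ∈ 𝓡 if and only if P(L) = 0, where P(L) := (L − L̂)^(A), with L̂ the matrix whose entries are L̂_{ij} = L_{ii}, and M^(A) := (M − Mᵀ)/2 the skew-symmetric part. -/

import Mathlib

open Matrix

lemma sum_ite_two' {N : ℕ} {i j : Fin N} (h : i ≠ j) (f g : Fin N → ℝ) :
    ∑ k : Fin N, (if k = i then f k else if k = j then g k else 0) = f i + g j := by
  have hpt : ∀ k : Fin N, (if k = i then f k else if k = j then g k else 0)
      = (if k = i then f k else 0) + (if k = j then g k else 0) := by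
    intro k
    split_ifs with h1 h2 <;> simp_all
  simp [hpt, Finset.sum_add_distrib, Finset.sum_ite_eq']

/-- The projector `P(L) = (L − L̂)^(A)` where `L̂ᵢⱼ = Lᵢᵢ` and
`M^(A) = (M − Mᵀ)/2` is the skew-symmetric part. -/
noncomputable def Pproj {N : ℕ} (L : Matrix (Fin N) (Fin N) ℝ) : Matrix (Fin N) (Fin N) ℝ :=
  Matrix.of fun i j => ((L i j - L i i) - (L j i - L j j)) / 2

/-- Proposition (Bauer et al.): for an `N×N` matrix `L`,
`⟨L,A⟩ = Tr(Lᵀ Ω A) = 0` for all `A ∈ 𝓡` (matrices with zero row sums and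
`Ωᵢᵢ Aᵢⱼ = −Ωⱼⱼ Aⱼᵢ` for `i ≠ j`, i.e. `AᵀΩ + ΩA` diagonal) if and only if
`P(L) = 0`. -/
theorem pairing_vanishes_iff_Pproj_eq_zero (N : ℕ) (Ω : Fin N → ℝ)
    (hΩ : ∀ i, 0 < Ω i) (L : Matrix (Fin N) (Fin N) ℝ) :
    (∀ A : Matrix (Fin N) (Fin N) ℝ,
        A.mulVec (fun _ => 1) = 0 →
        (∀ i j, i ≠ j → Ω i * A i j = -(Ω j * A j i)) →
        Matrix.trace (Lᵀ * Matrix.diagonal Ω * A) = 0)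
      ↔ Pproj L = 0 := by
  have htr : ∀ A : Matrix (Fin N) (Fin N) ℝ,
      Matrix.trace (Lᵀ * Matrix.diagonal Ω * A) = ∑ c, ∑ k, L k c * Ω k * A k c := by
    intro A
    simp [Matrix.trace, Matrix.diag, Matrix.mul_apply, Matrix.transpose_apply,
      Matrix.diagonal_apply, mul_ite, ite_mul, zero_mul, mul_zero, Finset.sum_ite_eq,
      Finset.sum_ite_eq']
  constructor
  · -- forward
    intro h
    ext i j
    simp only [Pproj, Matrix.of_apply, Matrix.zero_apply]
    by_cases hij : i = j
    · rw [hij]; ring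
    · have hΩi := (hΩ i).ne'
      have hΩj := (hΩ j).ne'
      obtain ⟨A, hAe⟩ : ∃ A : Matrix (Fin N) (Fin N) ℝ, ∀ a b, A a b =
          (if a = i then (if b = i then -(Ω i)⁻¹ else if b = j then (Ω i)⁻¹ else 0)
          else if a = j then (if b = i then -(Ω j)⁻¹ else if b = j then (Ω j)⁻¹ else 0)
          else 0) :=
        ⟨Matrix.of fun a b =>
          (if a = i then (if b = i then -(Ω i)⁻¹ else if b = j then (Ω i)⁻¹ else 0)
          else if a = j then (if b = i then -(Ω j)⁻¹ else if b = j then (Ω j)⁻¹ else 0)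
          else 0), fun a b => rfl⟩
      have hrow : A.mulVec (fun _ => 1) = 0 := by
        funext a
        simp only [Matrix.mulVec, dotProduct, mul_one, Pi.zero_apply]
        by_cases hai : a = i
        · rw [show (∑ b, A a b) = ∑ b : Fin N,
              (if b = i then (fun _ : Fin N => -(Ω i)⁻¹) b
               else if b = j then (fun _ : Fin N => (Ω i)⁻¹) b else 0) from
            Finset.sum_congr rfl (fun b _ => by rw [hAe, if_pos hai]), sum_ite_two' hij]
          ring
        · by_cases haj : a = j
          · rw [show (∑ b, A a b) = ∑ b : Fin N,
                (if b = i then (fun _ : Fin N => -(Ω j)⁻¹) b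
                 else if b = j then (fun _ : Fin N => (Ω j)⁻¹) b else 0) from
              Finset.sum_congr rfl (fun b _ => by rw [hAe, if_neg hai, if_pos haj]),
              sum_ite_two' hij]
            ring
          · rw [show (∑ b, A a b) = ∑ b : Fin N, (0:ℝ) from
              Finset.sum_congr rfl (fun b _ => by rw [hAe, if_neg hai, if_neg haj])]
            simp
      have hsym : ∀ a b, a ≠ b → Ω a * A a b = -(Ω b * A b a) := by
        intro a b hab
        clear h htr hrow
        rw [hAe a b, hAe b a]
        by_cases hai : a = i <;> by_cases haj : a = j <;>
          by_cases hbi : b = i <;> by_cases hbj : b = j <;>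
          simp only [hai, haj, hbi, hbj, if_true, if_false, ite_true, ite_false] <;>
          simp_all <;> field_simp
      have h0 := h A hrow hsym
      rw [htr] at h0
      have hin : ∀ c, (∑ k, L k c * Ω k * A k c)
          = L i c * Ω i * A i c + L j c * Ω j * A j c := by
        intro c
        rw [show (∑ k, L k c * Ω k * A k c)
            = ∑ k : Fin N, (if k = i then (fun k => L k c * Ω k * A k c) k
              else if k = j then (fun k => L k c * Ω k * A k c) k else 0) from
          Finset.sum_congr rfl (by
            intro k _
            by_cases hki : k = i
            · rw [if_pos hki]
            · by_cases hkj : k = j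
              · rw [if_neg hki, if_pos hkj]
              · rw [if_neg hki, if_neg hkj, hAe, if_neg hki, if_neg hkj, mul_zero]),
          sum_ite_two' hij]
      have hval : (∑ c, ∑ k, L k c * Ω k * A k c)
          = (L i j - L i i) + (L j j - L j i) := by
        simp_rw [hin]
        rw [show (∑ c, (L i c * Ω i * A i c + L j c * Ω j * A j c))
            = ∑ c : Fin N, (if c = i then
                (fun c => L i c * Ω i * A i c + L j c * Ω j * A j c) c
              else if c = j then
                (fun c => L i c * Ω i * A i c + L j c * Ω j * A j c) c
              else 0) from
          Finset.sum_congr rfl (by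
            intro c _
            by_cases hci : c = i
            · rw [if_pos hci]
            · by_cases hcj : c = j
              · rw [if_neg hci, if_pos hcj]
              · rw [if_neg hci, if_neg hcj, hAe, hAe, if_pos rfl, if_neg hci, if_neg hcj,
                  if_neg (Ne.symm hij), if_pos rfl, if_neg hci, if_neg hcj,
                  mul_zero, mul_zero, add_zero]),
          sum_ite_two' hij]
        rw [hAe i i, hAe j i, hAe i j, hAe j j]
        simp only [if_pos rfl, if_neg hij, if_neg (Ne.symm hij), if_true]
        field_simp
        ring
      rw [hval] at h0
      linarith
  · -- backward
    intro hP A hrow hsym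
    rw [htr]
    have hPe : ∀ a b, L a b - L a a = L b a - L b b := by
      intro a b
      have := congrFun (congrFun hP a) b
      simp only [Pproj, Matrix.of_apply, Matrix.zero_apply] at this
      linarith
    have hrow' : ∀ k, (∑ c, A k c) = 0 := by
      intro k
      have := congrFun hrow k
      simpa [Matrix.mulVec, dotProduct] using this
    rw [Finset.sum_comm]
    have hsplit : ∀ k c, L k c * Ω k * A k c
        = L k k * (Ω k * A k c) + (L k c - L k k) * (Ω k * A k c) := by
      intro k c; ring
    simp_rw [hsplit, Finset.sum_add_distrib]
    have h1 : (∑ k, ∑ c, L k k * (Ω k * A k c)) = 0 := by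
      apply Finset.sum_eq_zero
      intro k _
      rw [show (∑ c, L k k * (Ω k * A k c)) = L k k * Ω k * ∑ c, A k c by
        rw [Finset.mul_sum]; apply Finset.sum_congr rfl; intro c _; ring]
      rw [hrow' k]; ring
    rw [h1, zero_add]
    have hTalt : (∑ k, ∑ c, (L k c - L k k) * (Ω k * A k c))
        = ∑ k, ∑ c, (L k c - L k k) * (Ω c * A c k) := by
      rw [Finset.sum_comm]
      apply Finset.sum_congr rfl; intro k _
      apply Finset.sum_congr rfl; intro c _
      rw [show L c k - L c c = L k c - L k k from (hPe k c).symm]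
    have hT2 : (∑ k, ∑ c, (L k c - L k k) * (Ω k * A k c))
        + (∑ k, ∑ c, (L k c - L k k) * (Ω k * A k c)) = 0 := by
      nth_rewrite 1 [hTalt]
      rw [← Finset.sum_add_distrib]
      apply Finset.sum_eq_zero
      intro k _
      rw [← Finset.sum_add_distrib]
      apply Finset.sum_eq_zero
      intro c _
      by_cases hkc : k = c
      · rw [hkc]; ring
      · rw [show Ω k * A k c = -(Ω c * A c k) from hsym k c hkc]; ring
    linarith
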